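/- Let C be the (random) final set of centers produced by the fully online k-means algorithm on input v_1,…,v_n, let γ = (max_{u≠v} ‖u−v‖)/(min_{u≠v} ‖u−v‖) be the aspect ratio of the input (maxima and minima over distinct input points), and assume the input contains at least k+1 distinct vectors and n ≥ 2. Then there is a universal constant c₀ (independent of n, k, d, and the input vectors) such that E[|C|] ≤ c₀ · k · (1 + log₂ n) · (1 + log₂(γ n)). -/

import Mathlib

open scoped ENNReal

/-- Points of `ℝ^d`. -/
abbrev Pt (d : ℕ) := EuclideanSpace ℝ (Fin d)

/-- `D²(v, C)`: squared Euclidean distance from `v` to the nearest center in the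
list `C`. -/
noncomputable def D2 {d : ℕ} (v : Pt d) (C : List (Pt d)) : ℝ :=
  sInf {x | ∃ c ∈ C, x = ‖v - c‖ ^ 2}

/-- `min_{c ≠ c' ∈ C} ‖c - c'‖²` over a list `C` of points. -/
noncomputable def minPairSqDist {d : ℕ} (C : List (Pt d)) : ℝ :=
  sInf {x | ∃ c ∈ C, ∃ c' ∈ C, c ≠ c' ∧ x = ‖c - c'‖ ^ 2}

/-- State of the fully online `k`-means algorithm: current centers `C`, per-phase
counter `q`, current facility cost `f`, accumulated online service cost `cost`, and
running count `m` (which equals `k+1` once the first `k+1` distinct input vectors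
have been collected, and is incremented for every subsequent point). -/
structure OnState (d : ℕ) where
  C : List (Pt d)
  q : ℕ
  f : ℝ
  cost : ℝ
  m : ℕ

/-- Probability of opening a new cluster at `v`: `min(D²(v,C)/f, 1)`. -/
noncomputable def openProb {d : ℕ} (v : Pt d) (C : List (Pt d)) (f : ℝ) : ℝ≥0∞ :=
  match C with
  | [] => 1
  | _ :: _ => ENNReal.ofReal (min (D2 v C / f) 1)

lemma openProb_le_one {d : ℕ} (v : Pt d) (C : List (Pt d)) (f : ℝ) :
    openProb v C f ≤ 1 := by
  cases C with
  | nil => exact le_rfl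
  | cons a l => exact ENNReal.ofReal_le_one.mpr (min_le_right _ _)

/-- One step of the fully online `k`-means algorithm on point `v`. While fewer than
`k+1` distinct vectors have been seen (the initialization), every new distinct vector
becomes a center (and is its own center, at zero cost); when the `(k+1)`-st distinct
vector arrives, the facility cost is initialized to `w*/k` with
`w* = (1/2)·min_{c≠c'∈C} ‖c-c'‖²`. Afterwards, the running count `m` is incremented
and, with probability `min(D²(v,C)/f, 1)`, the point `v` is added as a new center and
the counter `q` incremented (starting a new phase, resetting `q` and doubling `f`,
once `q` reaches `3k(1+log₂ m)`); otherwise `v` is served by its nearest current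
center at cost `D²(v,C)`. -/
noncomputable def onStep {d : ℕ} (k : ℕ) (v : Pt d) (s : OnState d) :
    PMF (OnState d) :=
  letI : DecidableEq (Pt d) := Classical.decEq _
  if s.C.length < k + 1 then
    PMF.pure <|
      if v ∈ s.C then s
      else if s.C.length + 1 = k + 1 then
        { C := s.C ++ [v], q := 0, f := (minPairSqDist (s.C ++ [v]) / 2) / (k : ℝ),
          cost := s.cost, m := s.m + 1 }
      else
        { C := s.C ++ [v], q := 0, f := 0, cost := s.cost, m := s.m + 1 }
  else
    (PMF.bernoulli (openProb v s.C s.f).toNNReal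
      (by simpa using ENNReal.toNNReal_mono ENNReal.one_ne_top (openProb_le_one v s.C s.f))).bind fun b =>
      PMF.pure <|
        if b then
          if 3 * (k : ℝ) * (1 + Real.logb 2 ((s.m : ℝ) + 1)) ≤ (s.q : ℝ) + 1 then
            { C := s.C ++ [v], q := 0, f := 2 * s.f, cost := s.cost, m := s.m + 1 }
          else
            { C := s.C ++ [v], q := s.q + 1, f := s.f, cost := s.cost, m := s.m + 1 }
        else
          { s with cost := s.cost + D2 v s.C, m := s.m + 1 }

/-- The distribution over final states of the fully online `k`-means algorithm on the
stream `vs`. -/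
noncomputable def onRun {d : ℕ} (k : ℕ) (vs : List (Pt d)) : PMF (OnState d) :=
  vs.foldlM (fun s v => onStep k v s) { C := [], q := 0, f := 0, cost := 0, m := 0 }

/-- Expected number of centers of a (random) final state. -/
noncomputable def expectedCenters {d : ℕ} (μ : PMF (OnState d)) : ℝ≥0∞ :=
  ∑' s, μ s * (s.C.length : ℝ≥0∞)

/-- The aspect ratio `γ` of the input: the maximum distance between two distinct
input points divided by the minimum distance between two distinct input points. -/
noncomputable def aspectRatio {d n : ℕ} (v : Fin n → Pt d) : ℝ :=
  sSup {x | ∃ i j, v i ≠ v j ∧ x = ‖v i - v j‖} /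
    sInf {x | ∃ i j, v i ≠ v j ∧ x = ‖v i - v j‖}


/-! ### Auxiliary machinery for the proof -/

noncomputable def Epmf {α : Type*} (μ : PMF α) (g : α → ℝ≥0∞) : ℝ≥0∞ := ∑' a, μ a * g a

lemma Epmf_pure {α : Type*} (a : α) (g : α → ℝ≥0∞) : Epmf (PMF.pure a) g = g a := by
  unfold Epmf
  rw [tsum_eq_single a (fun b hb => by simp [PMF.pure_apply, hb])]
  simp [PMF.pure_apply]

lemma Epmf_bind {α β : Type*} (p : PMF α) (f : α → PMF β) (g : β → ℝ≥0∞) :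
    Epmf (p.bind f) g = ∑' a, p a * Epmf (f a) g := by
  unfold Epmf
  simp only [PMF.bind_apply]
  calc ∑' b, (∑' a, p a * (f a) b) * g b
      = ∑' b, ∑' a, p a * ((f a) b * g b) := by
        refine tsum_congr fun b => ?_
        rw [← ENNReal.tsum_mul_right]
        exact tsum_congr fun a => by ring
    _ = ∑' a, ∑' b, p a * ((f a) b * g b) := ENNReal.tsum_comm
    _ = ∑' a, p a * ∑' b, (f a) b * g b :=
        tsum_congr fun a => ENNReal.tsum_mul_left

lemma Epmf_add_const {α : Type*} (μ : PMF α) (g : α → ℝ≥0∞) (c : ℝ≥0∞) :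
    Epmf μ (fun a => g a + c) = Epmf μ g + c := by
  unfold Epmf
  simp_rw [mul_add]
  rw [ENNReal.tsum_add, ENNReal.tsum_mul_right, PMF.tsum_coe, one_mul]

lemma D2_nonneg {d : ℕ} (v : Pt d) (C : List (Pt d)) : 0 ≤ D2 v C :=
  Real.sInf_nonneg (by rintro x ⟨c, _, rfl⟩; positivity)

lemma D2_le {d : ℕ} (v : Pt d) {C : List (Pt d)} {c : Pt d} (hc : c ∈ C) :
    D2 v C ≤ ‖v - c‖ ^ 2 :=
  csInf_le ⟨0, by rintro x ⟨c', _, rfl⟩; positivity⟩ ⟨c, hc, rfl⟩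

lemma le_minPairSqDist {d : ℕ} {C : List (Pt d)} {w : ℝ}
    (hne : ∃ c ∈ C, ∃ c' ∈ C, c ≠ c')
    (hlow : ∀ c ∈ C, ∀ c' ∈ C, c ≠ c' → w ^ 2 ≤ ‖c - c'‖ ^ 2) :
    w ^ 2 ≤ minPairSqDist C := by
  obtain ⟨c, hc, c', hc', hcc⟩ := hne
  refine le_csInf ⟨_, c, hc, c', hc', hcc, rfl⟩ ?_
  rintro x ⟨a, ha, a', ha', haa, rfl⟩
  exact hlow a ha a' ha' haa

lemma openProb_le_div {d : ℕ} (v : Pt d) {C : List (Pt d)} (hC : C ≠ []) (f : ℝ) :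
    openProb v C f ≤ ENNReal.ofReal (D2 v C / f) := by
  cases C with
  | nil => exact absurd rfl hC
  | cons a l => exact ENNReal.ofReal_le_ofReal (min_le_left _ _)

/-- The maximal value reached by the per-phase counter. -/
noncomputable def Tc (k n : ℕ) : ℝ := 3 * k * (1 + Real.logb 2 n)

/-- Deterministic bound for the potential at the end of the initialization. -/
noncomputable def Ac (k n : ℕ) (w W : ℝ) : ℝ :=
  (k + 1 : ℝ) + (Tc k n + 1) * (1 + Real.logb 2 (((n : ℝ) * W ^ 2) / (w ^ 2 / (2 * k))))

/-- The potential function. -/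
noncomputable def phiR {d : ℕ} (k n : ℕ) (w W : ℝ) (s : OnState d) : ℝ :=
  if s.C.length < k + 1 then Ac k n w W
  else (s.C.length : ℝ) +
    max 0 ((Tc k n + 1) * (1 + Real.logb 2 (((n : ℝ) * W ^ 2) / s.f)) - s.q)

/-- Invariant maintained by the algorithm. -/
def InvS {d n : ℕ} (k : ℕ) (v : Fin n → Pt d) (s : OnState d) : Prop :=
  (∀ c ∈ s.C, ∃ i, c = v i) ∧
  (¬ s.C.length < k + 1 →
    0 < s.f ∧ 1 ≤ s.m ∧ (s.q : ℝ) ≤ 3 * k * (1 + Real.logb 2 s.m))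

section Steps

variable {d n k : ℕ} {v : Fin n → Pt d} {w W : ℝ}

lemma step_inv (hk : 1 ≤ k) (hw : 0 < w)
    (hlow : ∀ i j, v i ≠ v j → w ≤ ‖v i - v j‖)
    {s : OnState d} {x : Pt d} (hx : ∃ i, x = v i) (hInv : InvS k v s) :
    ∀ s', (onStep k x s) s' ≠ 0 → InvS k v s' ∧ s'.m ≤ s.m + 1 := by
  classical
  obtain ⟨hC, hPost⟩ := hInv
  have hk0 : (0:ℝ) < k := by exact_mod_cast hk
  have hcent : ∀ c ∈ s.C ++ [x], ∃ i, c = v i := by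
    intro c hc
    rcases List.mem_append.mp hc with h | h
    · exact hC c h
    · rw [List.mem_singleton.mp h]; exact hx
  have h3k : (0:ℝ) ≤ 3 * k := by positivity
  have hlogm1 : 0 ≤ Real.logb 2 ((s.m + 1 : ℕ) : ℝ) :=
    Real.logb_nonneg one_lt_two (by push_cast; linarith [Nat.cast_nonneg (α := ℝ) s.m])
  intro s' hs'
  have hsupp : s' ∈ (onStep k x s).support := hs'
  unfold onStep at hsupp
  split_ifs at hsupp with hlen hmem hfull hth
  · -- init, point already a center
    rw [PMF.support_pure, Set.mem_singleton_iff] at hsupp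
    subst hsupp
    exact ⟨⟨hC, hPost⟩, Nat.le_succ _⟩
  · -- init completes
    rw [PMF.support_pure, Set.mem_singleton_iff] at hsupp
    subst hsupp
    refine ⟨⟨hcent, fun _ => ?_⟩, le_refl _⟩
    have hCne : s.C ≠ [] := by
      intro h; rw [h] at hfull; simp at hfull; omega
    obtain ⟨c0, hc0⟩ := List.exists_mem_of_ne_nil _ hCne
    have hpair : ∃ c ∈ s.C ++ [x], ∃ c' ∈ s.C ++ [x], c ≠ c' :=
      ⟨c0, List.mem_append.mpr (Or.inl hc0), x,
        List.mem_append.mpr (Or.inr (List.mem_singleton.mpr rfl)),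
        fun h => hmem (h ▸ hc0)⟩
    have hlowp : ∀ c ∈ s.C ++ [x], ∀ c' ∈ s.C ++ [x], c ≠ c' → w ^ 2 ≤ ‖c - c'‖ ^ 2 := by
      intro c hc c' hc' hcc
      obtain ⟨i, rfl⟩ := hcent c hc
      obtain ⟨j, rfl⟩ := hcent c' hc'
      exact pow_le_pow_left₀ hw.le (hlow i j hcc) 2
    have hmin : w ^ 2 ≤ minPairSqDist (s.C ++ [x]) := le_minPairSqDist hpair hlowp
    have hw2 : (0:ℝ) < w ^ 2 := by positivity
    have hminpos : 0 < minPairSqDist (s.C ++ [x]) := lt_of_lt_of_le hw2 hmin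
    refine ⟨show (0:ℝ) < minPairSqDist (s.C ++ [x]) / 2 / k from by positivity,
      Nat.le_add_left _ _, ?_⟩
    show ((0:ℕ):ℝ) ≤ 3 * (k:ℝ) * (1 + Real.logb 2 ((s.m + 1 : ℕ) : ℝ))
    simp only [Nat.cast_zero]
    nlinarith
  · -- init continues
    rw [PMF.support_pure, Set.mem_singleton_iff] at hsupp
    subst hsupp
    refine ⟨⟨hcent, fun h => ?_⟩, le_refl _⟩
    exfalso
    simp only [List.length_append, List.length_singleton] at h
    omega
  · -- main phase, new phase on opening
    rw [PMF.mem_support_bind_iff] at hsupp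
    obtain ⟨b, -, hb⟩ := hsupp
    rw [PMF.mem_support_pure_iff] at hb
    obtain ⟨hf, hm1, hq⟩ := hPost hlen
    cases b with
    | false =>
      simp only [Bool.false_eq_true, if_false] at hb
      subst hb
      refine ⟨⟨hC, fun _ => ⟨hf, Nat.le_add_left _ _, ?_⟩⟩, le_refl _⟩
      have hm0 : (0:ℝ) < (s.m : ℝ) := by exact_mod_cast Nat.lt_of_lt_of_le Nat.zero_lt_one hm1
      have hmono : Real.logb 2 (s.m : ℝ) ≤ Real.logb 2 ((s.m + 1 : ℕ) : ℝ) := by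
        refine (Real.logb_le_logb one_lt_two hm0 (by push_cast; linarith)).mpr ?_
        push_cast; linarith
      nlinarith
    | true =>
      simp only [if_true] at hb
      subst hb
      refine ⟨⟨hcent, fun _ => ⟨show (0:ℝ) < 2 * s.f from by linarith,
        Nat.le_add_left _ _, ?_⟩⟩, le_refl _⟩
      show ((0:ℕ):ℝ) ≤ 3 * (k:ℝ) * (1 + Real.logb 2 ((s.m + 1 : ℕ) : ℝ))
      simp only [Nat.cast_zero]
      nlinarith
  · -- main phase, no new phase
    rw [PMF.mem_support_bind_iff] at hsupp
    obtain ⟨b, -, hb⟩ := hsupp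
    rw [PMF.mem_support_pure_iff] at hb
    obtain ⟨hf, hm1, hq⟩ := hPost hlen
    cases b with
    | false =>
      simp only [Bool.false_eq_true, if_false] at hb
      subst hb
      refine ⟨⟨hC, fun _ => ⟨hf, Nat.le_add_left _ _, ?_⟩⟩, le_refl _⟩
      have hm0 : (0:ℝ) < (s.m : ℝ) := by exact_mod_cast Nat.lt_of_lt_of_le Nat.zero_lt_one hm1
      have hmono : Real.logb 2 (s.m : ℝ) ≤ Real.logb 2 ((s.m + 1 : ℕ) : ℝ) := by
        refine (Real.logb_le_logb one_lt_two hm0 (by push_cast; linarith)).mpr ?_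
        push_cast; linarith
      nlinarith
    | true =>
      simp only [if_true] at hb
      subst hb
      refine ⟨⟨hcent, fun _ => ⟨hf, Nat.le_add_left _ _, ?_⟩⟩, le_refl _⟩
      push_cast
      push_cast at hth
      linarith [lt_of_not_ge hth]

lemma phiR_nonneg_of (hA : 0 ≤ Ac k n w W) (s : OnState d) : 0 ≤ phiR k n w W s := by
  unfold phiR
  split_ifs
  · exact hA
  · exact add_nonneg (Nat.cast_nonneg _) (le_max_left _ _)

set_option maxHeartbeats 1000000 in
lemma step_exp (hk : 1 ≤ k) (hn : 2 ≤ n) (hw : 0 < w) (hwW : w ≤ W)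
    (hlow : ∀ i j, v i ≠ v j → w ≤ ‖v i - v j‖)
    (hup : ∀ i j, v i ≠ v j → ‖v i - v j‖ ≤ W)
    {s : OnState d} {x : Pt d} (hx : ∃ i, x = v i) (hInv : InvS k v s)
    (hm : s.m + 1 ≤ n) :
    Epmf (onStep k x s) (fun s' => ENNReal.ofReal (phiR k n w W s')) ≤
      ENNReal.ofReal (phiR k n w W s + 1 / n) := by
  classical
  obtain ⟨hC, hPost⟩ := hInv
  have hk0 : (0:ℝ) < k := by exact_mod_cast hk
  have hn0 : (0:ℝ) < n := by positivity
  have hn2 : (2:ℝ) ≤ n := by exact_mod_cast hn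
  have hW : 0 < W := lt_of_lt_of_le hw hwW
  have hN1 : 1 ≤ Real.logb 2 n := by
    rw [← Real.logb_self_eq_one one_lt_two]
    exact (Real.logb_le_logb one_lt_two two_pos hn0).mpr hn2
  have hT0 : 0 ≤ Tc k n := by unfold Tc; nlinarith
  have hFF : (0:ℝ) < (n:ℝ) * W ^ 2 := by positivity
  have hf1pos : (0:ℝ) < w ^ 2 / (2 * k) := by positivity
  have hwsq : w ^ 2 ≤ W ^ 2 := pow_le_pow_left₀ hw.le hwW 2
  have hf1F : w ^ 2 / (2 * k) ≤ (n:ℝ) * W ^ 2 := by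
    have hk1 : (1:ℝ) ≤ k := by exact_mod_cast hk
    have h2 : w ^ 2 / (2 * k) ≤ w ^ 2 := by
      rw [div_le_iff₀ (by positivity)]
      nlinarith [mul_le_mul_of_nonneg_left hk1 (sq_nonneg w)]
    nlinarith [sq_nonneg W]
  have hAc2 : 0 ≤ 1 + Real.logb 2 (((n:ℝ) * W ^ 2) / (w ^ 2 / (2 * k))) := by
    have := Real.logb_nonneg one_lt_two ((one_le_div hf1pos).mpr hf1F)
    linarith
  have hA0 : 0 ≤ Ac k n w W := by
    unfold Ac
    nlinarith
  have hphi0 : ∀ t : OnState d, 0 ≤ phiR k n w W t := phiR_nonneg_of hA0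
  have h1n : (0:ℝ) ≤ 1 / n := by positivity
  by_cases hlen : s.C.length < k + 1
  · -- initialization step: deterministic, potential stays at `Ac`
    unfold onStep
    rw [if_pos hlen, Epmf_pure]
    refine ENNReal.ofReal_le_ofReal ?_
    have hphis : phiR k n w W s = Ac k n w W := by unfold phiR; rw [if_pos hlen]
    rw [hphis]
    split_ifs with hmem hfull
    · rw [hphis]; linarith
    · -- initialization completes
      have hcent : ∀ c ∈ s.C ++ [x], ∃ i, c = v i := by
        intro c hc
        rcases List.mem_append.mp hc with h | h
        · exact hC c h
        · rw [List.mem_singleton.mp h]; exact hx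
      have hCne : s.C ≠ [] := by
        intro h; rw [h] at hfull; simp at hfull; omega
      obtain ⟨c0, hc0⟩ := List.exists_mem_of_ne_nil _ hCne
      have hpair : ∃ c ∈ s.C ++ [x], ∃ c' ∈ s.C ++ [x], c ≠ c' :=
        ⟨c0, List.mem_append.mpr (Or.inl hc0), x,
          List.mem_append.mpr (Or.inr (List.mem_singleton.mpr rfl)),
          fun h => hmem (h ▸ hc0)⟩
      have hlowp : ∀ c ∈ s.C ++ [x], ∀ c' ∈ s.C ++ [x], c ≠ c' → w ^ 2 ≤ ‖c - c'‖ ^ 2 := by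
        intro c hc c' hc' hcc
        obtain ⟨i, rfl⟩ := hcent c hc
        obtain ⟨j, rfl⟩ := hcent c' hc'
        exact pow_le_pow_left₀ hw.le (hlow i j hcc) 2
      have hmin : w ^ 2 ≤ minPairSqDist (s.C ++ [x]) := le_minPairSqDist hpair hlowp
      have hf1lb : w ^ 2 / (2 * k) ≤ minPairSqDist (s.C ++ [x]) / 2 / k := by
        rw [div_div, div_le_div_iff₀ (by positivity) (by positivity)]
        nlinarith
      have hf1pos' : (0:ℝ) < minPairSqDist (s.C ++ [x]) / 2 / k :=
        lt_of_lt_of_le hf1pos hf1lb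
      have hlen' : ¬ ((s.C ++ [x]).length < k + 1) := by
        simp only [List.length_append, List.length_singleton]; omega
      unfold phiR
      dsimp only
      rw [if_neg hlen']
      have hlencast : ((s.C ++ [x]).length : ℝ) = k + 1 := by
        simp only [List.length_append, List.length_singleton]
        exact_mod_cast congrArg (Nat.cast (R := ℝ)) hfull
      have hlogmono : Real.logb 2 (((n:ℝ) * W ^ 2) / (minPairSqDist (s.C ++ [x]) / 2 / k)) ≤
          Real.logb 2 (((n:ℝ) * W ^ 2) / (w ^ 2 / (2 * k))) := by
        refine (Real.logb_le_logb one_lt_two (by positivity) (by positivity)).mpr ?_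
        exact div_le_div₀ hFF.le le_rfl hf1pos hf1lb
      have hmax : max 0 ((Tc k n + 1) * (1 + Real.logb 2
          (((n:ℝ) * W ^ 2) / (minPairSqDist (s.C ++ [x]) / 2 / k))) - ((0:ℕ):ℝ)) ≤
          (Tc k n + 1) * (1 + Real.logb 2 (((n:ℝ) * W ^ 2) / (w ^ 2 / (2 * k)))) := by
        refine max_le (mul_nonneg (by linarith) hAc2) ?_
        simp only [Nat.cast_zero, sub_zero]
        exact mul_le_mul_of_nonneg_left (by linarith) (by linarith)
      unfold Ac
      rw [hlencast]
      linarith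
    · -- initialization continues
      have hlt : (s.C ++ [x]).length < k + 1 := by
        simp only [List.length_append, List.length_singleton]; omega
      unfold phiR
      dsimp only
      rw [if_pos hlt]
      linarith
  · -- main phase step
    obtain ⟨hf, hm1, hq'⟩ := hPost hlen
    have hmn : (s.m : ℝ) ≤ n := by exact_mod_cast Nat.le_of_succ_le hm
    have hm0 : (0:ℝ) < (s.m : ℝ) := by exact_mod_cast Nat.lt_of_lt_of_le Nat.zero_lt_one hm1
    have hq : (s.q : ℝ) ≤ Tc k n := by
      have hmono : Real.logb 2 (s.m : ℝ) ≤ Real.logb 2 (n : ℝ) :=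
        (Real.logb_le_logb one_lt_two hm0 hn0).mpr hmn
      unfold Tc
      nlinarith
    unfold onStep
    rw [if_neg hlen, Epmf_bind, tsum_bool]
    simp only [Epmf_pure, PMF.bernoulli_apply, cond_false, cond_true, Bool.false_eq_true,
      if_false, if_true, ENNReal.coe_sub, ENNReal.coe_one,
      ENNReal.coe_toNNReal (ne_top_of_le_ne_top ENNReal.one_ne_top (openProb_le_one x s.C s.f))]
    erw [PMF.bernoulli_apply, PMF.bernoulli_apply]
    simp only [cond_false, cond_true, ENNReal.coe_sub, ENNReal.coe_one,
      ENNReal.coe_toNNReal (ne_top_of_le_ne_top ENNReal.one_ne_top (openProb_le_one x s.C s.f))]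
    set p : ℝ≥0∞ := openProb x s.C s.f with hp
    have hple : p ≤ 1 := openProb_le_one x s.C s.f
    set sT : OnState d := if 3 * (k:ℝ) * (1 + Real.logb 2 ((s.m : ℝ) + 1)) ≤ (s.q : ℝ) + 1 then
        { C := s.C ++ [x], q := 0, f := 2 * s.f, cost := s.cost, m := s.m + 1 }
      else
        { C := s.C ++ [x], q := s.q + 1, f := s.f, cost := s.cost, m := s.m + 1 } with hsT
    have hsF : phiR k n w W { s with cost := s.cost + D2 x s.C, m := s.m + 1 } =
        phiR k n w W s := rfl
    set X : ℝ := (Tc k n + 1) * (1 + Real.logb 2 (((n:ℝ) * W ^ 2) / s.f)) with hX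
    have hphis : phiR k n w W s = (s.C.length : ℝ) + max 0 (X - s.q) := by
      unfold phiR; rw [if_neg hlen]
    have hlen2 : ¬ ((s.C ++ [x]).length < k + 1) := by
      simp only [List.length_append, List.length_singleton]; omega
    have hlencast : ((s.C ++ [x]).length : ℝ) = (s.C.length : ℝ) + 1 := by
      simp only [List.length_append, List.length_singleton]; push_cast; ring
    have hhalf : (Tc k n + 1) * (1 + Real.logb 2 (((n:ℝ) * W ^ 2) / (2 * s.f))) =
        X - (Tc k n + 1) := by
      have h2f : ((n:ℝ) * W ^ 2) / (2 * s.f) = ((n:ℝ) * W ^ 2 / s.f) / 2 := by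
        ring
      rw [h2f, Real.logb_div (ne_of_gt (div_pos hFF hf)) two_ne_zero,
        Real.logb_self_eq_one one_lt_two, hX]
      ring
    have hTpos : 0 < Tc k n + 1 := by linarith
    by_cases hca : 1 ≤ X - (s.q : ℝ)
    · -- potential strictly pays for the new center
      have hmr : max 0 (X - (s.q:ℝ)) = X - (s.q:ℝ) := max_eq_right (by linarith)
      have hone : phiR k n w W sT ≤ phiR k n w W s := by
        rw [hphis, hsT]
        split_ifs with hth
        · unfold phiR
          dsimp only
          rw [if_neg hlen2, hlencast, hhalf, hmr]
          simp only [Nat.cast_zero, sub_zero]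
          have h1 : max 0 (X - (Tc k n + 1)) ≤ X - (s.q : ℝ) - 1 :=
            max_le (by linarith) (by linarith)
          linarith
        · unfold phiR
          dsimp only
          rw [if_neg hlen2, hlencast, hmr]
          have h1 : max 0 (X - ((s.q : ℝ) + 1)) ≤ X - (s.q : ℝ) - 1 :=
            max_le (by linarith) (by linarith)
          push_cast
          linarith
      calc (1 - p) * ENNReal.ofReal (phiR k n w W
              { s with cost := s.cost + D2 x s.C, m := s.m + 1 }) +
            p * ENNReal.ofReal (phiR k n w W sT)
          ≤ (1 - p) * ENNReal.ofReal (phiR k n w W s) + p * ENNReal.ofReal (phiR k n w W s) := by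
            rw [hsF]
            exact add_le_add_right (mul_le_mul_right (ENNReal.ofReal_le_ofReal hone) p) _
        _ = ENNReal.ofReal (phiR k n w W s) := by
            rw [← add_mul, tsub_add_cancel_of_le hple, one_mul]
        _ ≤ ENNReal.ofReal (phiR k n w W s + 1 / n) :=
            ENNReal.ofReal_le_ofReal (by linarith)
    · -- the facility cost is already huge: opening probability is at most 1/n
      have hXlt : X < 1 + (s.q : ℝ) := by linarith [lt_of_not_ge hca]
      have hlogneg : Real.logb 2 (((n:ℝ) * W ^ 2) / s.f) < 0 := by nlinarith
      have hfF : (n:ℝ) * W ^ 2 < s.f := by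
        have hdiv1 : ((n:ℝ) * W ^ 2) / s.f < 1 := by
          by_contra hge
          exact absurd (Real.logb_nonneg one_lt_two (le_of_not_gt hge))
            (not_le.mpr hlogneg)
        exact (div_lt_one hf).mp hdiv1
      have hp1n : p ≤ ENNReal.ofReal (1 / n) := by
        have hCne : s.C ≠ [] := by
          intro h; rw [h] at hlen; simp at hlen
        refine le_trans (openProb_le_div x hCne s.f) (ENNReal.ofReal_le_ofReal ?_)
        have hD2 : D2 x s.C ≤ W ^ 2 := by
          obtain ⟨c0, hc0⟩ := List.exists_mem_of_ne_nil _ hCne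
          obtain ⟨j, hj⟩ := hC c0 hc0
          obtain ⟨i, hi⟩ := hx
          by_cases hij : v i = v j
          · refine le_trans (D2_le x hc0) ?_
            rw [hi, hj, hij, sub_self]
            have : ‖(0 : Pt d)‖ ^ 2 = 0 := by simp
            rw [this]
            positivity
          · refine le_trans (D2_le x hc0) ?_
            rw [hi, hj]
            exact pow_le_pow_left₀ (norm_nonneg _) (hup i j hij) 2
        calc D2 x s.C / s.f ≤ W ^ 2 / ((n:ℝ) * W ^ 2) :=
              div_le_div₀ (by positivity) hD2 hFF hfF.le
          _ = 1 / n := by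
              field_simp
      have hone : phiR k n w W sT ≤ phiR k n w W s + 1 := by
        rw [hphis, hsT]
        split_ifs with hth
        · unfold phiR
          dsimp only
          rw [if_neg hlen2, hlencast, hhalf]
          simp only [Nat.cast_zero, sub_zero]
          have h1 : max 0 (X - (Tc k n + 1)) ≤ max 0 (X - (s.q:ℝ)) :=
            max_le_max le_rfl (by linarith)
          linarith
        · unfold phiR
          dsimp only
          rw [if_neg hlen2, hlencast]
          have h1 : max 0 (X - ((s.q:ℝ) + 1)) ≤ max 0 (X - (s.q:ℝ)) :=
            max_le_max le_rfl (by linarith)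
          push_cast
          linarith
      calc (1 - p) * ENNReal.ofReal (phiR k n w W
              { s with cost := s.cost + D2 x s.C, m := s.m + 1 }) +
            p * ENNReal.ofReal (phiR k n w W sT)
          ≤ (1 - p) * ENNReal.ofReal (phiR k n w W s) +
              p * (ENNReal.ofReal (phiR k n w W s) + 1) := by
            rw [hsF]
            refine add_le_add_right (mul_le_mul_right ?_ p) _
            refine le_trans (ENNReal.ofReal_le_ofReal hone) ?_
            rw [ENNReal.ofReal_add (hphi0 s) zero_le_one, ENNReal.ofReal_one]
        _ = ENNReal.ofReal (phiR k n w W s) + p := by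
            rw [mul_add, mul_one, ← add_assoc, ← add_mul, tsub_add_cancel_of_le hple, one_mul]
        _ ≤ ENNReal.ofReal (phiR k n w W s) + ENNReal.ofReal (1 / n) :=
            add_le_add_right hp1n _
        _ = ENNReal.ofReal (phiR k n w W s + 1 / n) :=
            (ENNReal.ofReal_add (hphi0 s) h1n).symm

lemma Ac_ge (hk : 1 ≤ k) (hn : 2 ≤ n) (hw : 0 < w) (hwW : w ≤ W) :
    (k + 1 : ℝ) ≤ Ac k n w W := by
  have hk0 : (0:ℝ) < k := by exact_mod_cast hk
  have hk1 : (1:ℝ) ≤ k := by exact_mod_cast hk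
  have hn0 : (0:ℝ) < n := by positivity
  have hn2 : (2:ℝ) ≤ n := by exact_mod_cast hn
  have hW : 0 < W := lt_of_lt_of_le hw hwW
  have hN1 : 1 ≤ Real.logb 2 n := by
    rw [← Real.logb_self_eq_one one_lt_two]
    exact (Real.logb_le_logb one_lt_two two_pos hn0).mpr hn2
  have hT0 : 0 ≤ Tc k n := by unfold Tc; nlinarith
  have hf1pos : (0:ℝ) < w ^ 2 / (2 * k) := by positivity
  have hwsq : w ^ 2 ≤ W ^ 2 := pow_le_pow_left₀ hw.le hwW 2
  have hf1F : w ^ 2 / (2 * k) ≤ (n:ℝ) * W ^ 2 := by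
    have h2 : w ^ 2 / (2 * k) ≤ w ^ 2 := by
      rw [div_le_iff₀ (by positivity)]
      nlinarith [mul_le_mul_of_nonneg_left hk1 (sq_nonneg w)]
    nlinarith [sq_nonneg W]
  have hAc2 : 0 ≤ 1 + Real.logb 2 (((n:ℝ) * W ^ 2) / (w ^ 2 / (2 * k))) := by
    have := Real.logb_nonneg one_lt_two ((one_le_div hf1pos).mpr hf1F)
    linarith
  unfold Ac
  nlinarith

lemma key (hk : 1 ≤ k) (hn : 2 ≤ n) (hw : 0 < w) (hwW : w ≤ W)
    (hlow : ∀ i j, v i ≠ v j → w ≤ ‖v i - v j‖)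
    (hup : ∀ i j, v i ≠ v j → ‖v i - v j‖ ≤ W) :
    ∀ (l : List (Pt d)) (s : OnState d), (∀ x ∈ l, ∃ i, x = v i) → InvS k v s →
      s.m + l.length ≤ n →
      Epmf (l.foldlM (fun s v => onStep k v s) s)
          (fun t => ENNReal.ofReal (phiR k n w W t)) ≤
        ENNReal.ofReal (phiR k n w W s) + l.length * ENNReal.ofReal (1 / n) := by
  have hA0 : 0 ≤ Ac k n w W := le_trans (by positivity) (Ac_ge hk hn hw hwW)
  have hphi0 : ∀ t : OnState d, 0 ≤ phiR k n w W t := phiR_nonneg_of hA0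
  intro l
  induction l with
  | nil =>
    intro s _ _ _
    rw [List.foldlM_nil]
    rw [show (pure s : PMF (OnState d)) = PMF.pure s from rfl, Epmf_pure]
    simp
  | cons x l ih =>
    intro s hmem hInv hm
    rw [List.foldlM_cons]
    have hb : ((fun s v => onStep k v s) s x >>=
          fun s' => List.foldlM (fun s v => onStep k v s) s' l)
        = (onStep k x s).bind fun s' => List.foldlM (fun s v => onStep k v s) s' l := rfl
    rw [hb, Epmf_bind]
    have hx : ∃ i, x = v i := hmem x (List.mem_cons_self)
    have hm1 : s.m + 1 ≤ n := by
      simp only [List.length_cons] at hm; omega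
    calc ∑' s', (onStep k x s) s' *
            Epmf (List.foldlM (fun s v => onStep k v s) s' l)
              (fun t => ENNReal.ofReal (phiR k n w W t))
        ≤ ∑' s', (onStep k x s) s' *
            (ENNReal.ofReal (phiR k n w W s') + l.length * ENNReal.ofReal (1 / n)) := by
          refine ENNReal.tsum_le_tsum fun s' => ?_
          by_cases h0 : (onStep k x s) s' = 0
          · simp [h0]
          · obtain ⟨hInv', hm'⟩ := step_inv hk hw hlow hx hInv s' h0
            refine mul_le_mul_right
              (ih s' (fun y hy => hmem y (List.mem_cons_of_mem _ hy)) hInv' ?_) _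
            simp only [List.length_cons] at hm
            omega
      _ = Epmf (onStep k x s) (fun t => ENNReal.ofReal (phiR k n w W t)) +
            l.length * ENNReal.ofReal (1 / n) :=
          Epmf_add_const (onStep k x s) _ _
      _ ≤ ENNReal.ofReal (phiR k n w W s + 1 / n) + l.length * ENNReal.ofReal (1 / n) :=
          add_le_add_left (step_exp hk hn hw hwW hlow hup hx hInv hm1) _
      _ = ENNReal.ofReal (phiR k n w W s) + (x :: l).length * ENNReal.ofReal (1 / n) := by
          rw [ENNReal.ofReal_add (hphi0 s) (by positivity)]
          simp only [List.length_cons]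
          push_cast
          ring

lemma final_arith (hk : 1 ≤ k) (hn : 2 ≤ n) (hkn : k ≤ n) (hw : 0 < w) (hwW : w ≤ W) :
    Ac k n w W + 1 ≤ 100 * k * (1 + Real.logb 2 n) * (1 + Real.logb 2 (W / w * n)) := by
  have hk0 : (0:ℝ) < k := by exact_mod_cast hk
  have hk1 : (1:ℝ) ≤ k := by exact_mod_cast hk
  have hn0 : (0:ℝ) < n := by positivity
  have hn2 : (2:ℝ) ≤ n := by exact_mod_cast hn
  have hW : 0 < W := lt_of_lt_of_le hw hwW
  have hN1 : 1 ≤ Real.logb 2 n := by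
    rw [← Real.logb_self_eq_one one_lt_two]
    exact (Real.logb_le_logb one_lt_two two_pos hn0).mpr hn2
  have hG0 : 0 ≤ Real.logb 2 (W / w) := Real.logb_nonneg one_lt_two ((one_le_div hw).mpr hwW)
  have hK0 : 0 ≤ Real.logb 2 k := Real.logb_nonneg one_lt_two (by exact_mod_cast hk)
  have hKN : Real.logb 2 k ≤ Real.logb 2 n :=
    (Real.logb_le_logb one_lt_two hk0 hn0).mpr (by exact_mod_cast hkn)
  have hg0 : (0:ℝ) < W / w := by positivity
  have hsplit : Real.logb 2 (W / w * n) = Real.logb 2 (W / w) + Real.logb 2 n :=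
    Real.logb_mul (ne_of_gt hg0) (ne_of_gt hn0)
  have harg : ((n:ℝ) * W ^ 2) / (w ^ 2 / (2 * k)) = 2 * ((k:ℝ) * ((n:ℝ) * (W / w) ^ 2)) := by
    field_simp
  have hexp : Real.logb 2 (((n:ℝ) * W ^ 2) / (w ^ 2 / (2 * k))) =
      1 + Real.logb 2 k + Real.logb 2 n + 2 * Real.logb 2 (W / w) := by
    rw [harg, Real.logb_mul two_ne_zero (by positivity),
      Real.logb_mul (ne_of_gt hk0) (by positivity),
      Real.logb_mul (ne_of_gt hn0) (by positivity),
      Real.logb_self_eq_one one_lt_two, Real.logb_pow]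
    push_cast
    ring
  unfold Ac Tc
  rw [hexp, hsplit]
  set N := Real.logb 2 (n : ℝ) with hN
  set K := Real.logb 2 (k : ℝ) with hK
  set G := Real.logb 2 (W / w) with hG
  have hP2 : (2:ℝ) ≤ 1 + N := by linarith
  have e2 : 3 * (k:ℝ) * (1 + N) + 1 ≤ 4 * ((k:ℝ) * (1 + N)) := by nlinarith
  have e1 : 1 + (1 + K + N + 2 * G) ≤ 2 * (1 + (G + N)) := by linarith
  have e3 : (3 * (k:ℝ) * (1 + N) + 1) * (1 + (1 + K + N + 2 * G)) ≤
      (4 * ((k:ℝ) * (1 + N))) * (2 * (1 + (G + N))) :=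
    mul_le_mul e2 e1 (by linarith) (by positivity)
  have e4 : (1:ℝ) ≤ (1 + N) * (1 + (G + N)) := by nlinarith
  nlinarith [e3, e4, mul_le_mul_of_nonneg_left e4 hk0.le]

end Steps

/-- There is a universal constant `c₀` such that for every dimension `d`,
every `k ≥ 1` and every stream `v 0, …, v (n-1)` in `ℝ^d` with `n ≥ 2` containing at
least `k+1` distinct vectors, the expected number of centers produced by the fully
online `k`-means algorithm is at most `c₀ · k · (1 + log₂ n) · (1 + log₂(γ·n))`,
where `γ` is the aspect ratio of the input. -/
theorem fullyOnline_expected_number_of_centers :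
    ∃ c₀ : ℝ, 0 < c₀ ∧
      ∀ (d n k : ℕ) (v : Fin n → Pt d),
        2 ≤ n → 1 ≤ k →
        (∃ I : Fin (k + 1) → Fin n, Function.Injective (fun a => v (I a))) →
        expectedCenters (onRun k (List.ofFn v)) ≤
          ENNReal.ofReal (c₀ * k * (1 + Real.logb 2 n) *
            (1 + Real.logb 2 (aspectRatio v * n))) := by
  classical
  refine ⟨100, by norm_num, ?_⟩
  intro d n k v hn hk hdist
  obtain ⟨I, hI⟩ := hdist
  have hIinj : Function.Injective I := fun a b h => hI (congrArg v h)
  have hkn : k + 1 ≤ n := by simpa using Fintype.card_le_of_injective I hIinj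
  have h01 : v (I ⟨0, by omega⟩) ≠ v (I ⟨1, by omega⟩) := by
    intro h
    have h2 := hI h
    exact absurd (congrArg Fin.val h2) (by simp)
  set S : Set ℝ := {x | ∃ i j, v i ≠ v j ∧ x = ‖v i - v j‖} with hS
  have hSfin : S.Finite := by
    refine Set.Finite.subset
      (Set.finite_range (fun p : Fin n × Fin n => ‖v p.1 - v p.2‖)) ?_
    rintro x ⟨i, j, -, rfl⟩
    exact ⟨(i, j), rfl⟩
  have hSne : S.Nonempty := ⟨‖v (I ⟨0, by omega⟩) - v (I ⟨1, by omega⟩)‖,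
    I ⟨0, by omega⟩, I ⟨1, by omega⟩, h01, rfl⟩
  have hmemS : sInf S ∈ S := hSne.csInf_mem hSfin
  have hw : 0 < sInf S := by
    obtain ⟨i, j, hij, hE⟩ := hmemS
    rw [hE]
    exact norm_sub_pos_iff.mpr hij
  have hmemS' : sInf S ∈ S := hSne.csInf_mem hSfin
  have hwW : sInf S ≤ sSup S := le_csSup hSfin.bddAbove hmemS'
  have hlow : ∀ i j, v i ≠ v j → sInf S ≤ ‖v i - v j‖ :=
    fun i j h => csInf_le hSfin.bddBelow ⟨i, j, h, rfl⟩
  have hup : ∀ i j, v i ≠ v j → ‖v i - v j‖ ≤ sSup S :=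
    fun i j h => le_csSup hSfin.bddAbove ⟨i, j, h, rfl⟩
  set s0 : OnState d := { C := [], q := 0, f := 0, cost := 0, m := 0 } with hs0
  have hInv0 : InvS k v s0 := by
    constructor
    · intro c hc; rw [hs0] at hc; simp at hc
    · intro h; exfalso; apply h; rw [hs0]; simp
  have hmem0 : ∀ x ∈ List.ofFn v, ∃ i, x = v i := by
    intro x hx
    obtain ⟨i, rfl⟩ := List.mem_ofFn.mp hx
    exact ⟨i, rfl⟩
  have hbudget : s0.m + (List.ofFn v).length ≤ n := by rw [hs0]; simp
  have hkey := key hk hn hw hwW hlow hup (List.ofFn v) s0 hmem0 hInv0 hbudget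
  have hA0 : 0 ≤ Ac k n (sInf S) (sSup S) :=
    le_trans (by positivity) (Ac_ge hk hn hw hwW)
  have hle1 : expectedCenters (onRun k (List.ofFn v)) ≤
      Epmf (onRun k (List.ofFn v))
        (fun t => ENNReal.ofReal (phiR k n (sInf S) (sSup S) t)) := by
    unfold expectedCenters Epmf
    refine ENNReal.tsum_le_tsum fun s => mul_le_mul_right ?_ _
    rw [← ENNReal.ofReal_natCast]
    refine ENNReal.ofReal_le_ofReal ?_
    unfold phiR
    split_ifs with h
    · calc (s.C.length : ℝ) ≤ (k:ℝ) + 1 := by exact_mod_cast Nat.le_of_lt h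
        _ ≤ Ac k n (sInf S) (sSup S) := Ac_ge hk hn hw hwW
    · exact le_add_of_nonneg_right (le_max_left _ _)
  have hle2 : expectedCenters (onRun k (List.ofFn v)) ≤
      ENNReal.ofReal (phiR k n (sInf S) (sSup S) s0) +
        ((List.ofFn v).length : ℝ≥0∞) * ENNReal.ofReal (1 / n) :=
    le_trans hle1 hkey
  have hphis0 : phiR k n (sInf S) (sSup S) s0 = Ac k n (sInf S) (sSup S) := by
    unfold phiR
    rw [if_pos]
    rw [hs0]
    simp
  have hn0 : (0:ℝ) < n := by
    have : 0 < n := by omega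
    exact_mod_cast this
  have hcount : ((List.ofFn v).length : ℝ≥0∞) * ENNReal.ofReal (1 / n) = 1 := by
    rw [List.length_ofFn, ← ENNReal.ofReal_natCast n,
      ← ENNReal.ofReal_mul (le_of_lt hn0), mul_one_div, div_self (ne_of_gt hn0),
      ENNReal.ofReal_one]
  rw [hphis0, hcount] at hle2
  refine le_trans hle2 ?_
  rw [← ENNReal.ofReal_one, ← ENNReal.ofReal_add hA0 zero_le_one]
  refine ENNReal.ofReal_le_ofReal ?_
  have hAR : aspectRatio v = sSup S / sInf S := rfl
  rw [hAR]
  exact final_arith hk hn (by omega) hw hwW
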